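/- Let R be a discrete valuation ring with maximal ideal m. The R-algebra A = { x ∈ Mat₂(R) : the (1,2) entry of x lies in m } is not isomorphic to Mat₂(R) as an R-algebra. -/

import Mathlib

open Matrix

/-- The `R`-order `A = { x ∈ Mat₂(R) : x₀₁ ∈ I }` inside `Mat₂(R)`, for an ideal `I` of
`R`. -/
def matOrder (R : Type*) [CommRing R] (I : Ideal R) :
    Subalgebra R (Matrix (Fin 2) (Fin 2) R) where
  carrier := {x | x 0 1 ∈ I}
  mul_mem' := by
    intro x y hx hy
    simp only [Set.mem_setOf_eq] at *
    rw [Matrix.mul_apply, Fin.sum_univ_two]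
    exact I.add_mem (I.mul_mem_left _ hy) (I.mul_mem_right _ hx)
  add_mem' := by
    intro x y hx hy
    simpa [Matrix.add_apply] using I.add_mem hx hy
  one_mem' := by
    simp only [Set.mem_setOf_eq, Matrix.one_apply_ne (by decide : (0 : Fin 2) ≠ 1)]
    exact I.zero_mem
  zero_mem' := by
    simp only [Set.mem_setOf_eq, Matrix.zero_apply]
    exact I.zero_mem
  algebraMap_mem' := by
    intro r
    simp only [Set.mem_setOf_eq, Matrix.algebraMap_matrix_apply,
      if_neg (by decide : ¬(0 : Fin 2) = 1)]
    exact I.zero_mem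

/-- Let `R` be a discrete valuation ring with maximal ideal `m`.  The
`R`-algebra `A = { x ∈ Mat₂(R) : x₀₁ ∈ m }` is not isomorphic to `Mat₂(R)` as an
`R`-algebra. -/
theorem matOrder_not_iso_matrix
    (R : Type*) [CommRing R] [IsDomain R] [IsDiscreteValuationRing R] :
    IsEmpty ((matOrder R (IsLocalRing.maximalIdeal R)) ≃ₐ[R] Matrix (Fin 2) (Fin 2) R) := by
  constructor
  intro f
  set m := IsLocalRing.maximalIdeal R with hm_def
  have hmax : m.IsMaximal := IsLocalRing.maximalIdeal.isMaximal R
  have hprime : m.IsPrime := hmax.isPrime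
  set x : matOrder R m := f.symm !![0,1;0,0] with hx_def
  set y : matOrder R m := f.symm !![0,0;1,0] with hy_def
  have hx2 : x * x = 0 := by
    rw [hx_def, ← _root_.map_mul]
    have : (!![0,1;0,0] : Matrix (Fin 2) (Fin 2) R) * !![0,1;0,0] = 0 := by
      ext i j; fin_cases i <;> fin_cases j <;>
        simp [Matrix.mul_apply, Fin.sum_univ_two]
    rw [this, map_zero]
  have hy2 : y * y = 0 := by
    rw [hy_def, ← _root_.map_mul]
    have : (!![0,0;1,0] : Matrix (Fin 2) (Fin 2) R) * !![0,0;1,0] = 0 := by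
      ext i j; fin_cases i <;> fin_cases j <;>
        simp [Matrix.mul_apply, Fin.sum_univ_two]
    rw [this, map_zero]
  have hxy : x * y + y * x = 1 := by
    apply f.injective
    rw [map_add, _root_.map_mul, _root_.map_mul, _root_.map_one, hx_def, hy_def,
      AlgEquiv.apply_symm_apply, AlgEquiv.apply_symm_apply]
    ext i j; fin_cases i <;> fin_cases j <;>
      simp [Matrix.mul_apply, Fin.sum_univ_two, Matrix.one_apply]
  -- pass to underlying matrices
  set X : Matrix (Fin 2) (Fin 2) R := (x : Matrix (Fin 2) (Fin 2) R) with hX_def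
  set Y : Matrix (Fin 2) (Fin 2) R := (y : Matrix (Fin 2) (Fin 2) R) with hY_def
  have hX2 : X * X = 0 := by simpa using congrArg Subtype.val hx2
  have hY2 : Y * Y = 0 := by simpa using congrArg Subtype.val hy2
  have hXY : X * Y + Y * X = 1 := by simpa using congrArg Subtype.val hxy
  have hXb : X 0 1 ∈ m := x.2
  have hYb : Y 0 1 ∈ m := y.2
  -- diagonal entries of X and Y lie in m
  have diag_mem : ∀ (Z : Matrix (Fin 2) (Fin 2) R), Z * Z = 0 → Z 0 1 ∈ m →
      Z 0 0 ∈ m ∧ Z 1 1 ∈ m := by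
    intro Z hZ hZb
    have h00 : Z 0 0 * Z 0 0 + Z 0 1 * Z 1 0 = 0 := by
      have := congrFun (congrFun hZ 0) 0
      rwa [Matrix.mul_apply, Fin.sum_univ_two] at this
    have h11 : Z 1 0 * Z 0 1 + Z 1 1 * Z 1 1 = 0 := by
      have := congrFun (congrFun hZ 1) 1
      rwa [Matrix.mul_apply, Fin.sum_univ_two] at this
    constructor
    · have : Z 0 0 * Z 0 0 ∈ m := by
        have : Z 0 0 * Z 0 0 = -(Z 0 1 * Z 1 0) := by linear_combination h00
        rw [this]
        exact m.neg_mem (m.mul_mem_right _ hZb)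
      rcases hprime.mem_or_mem this with h | h <;> exact h
    · have : Z 1 1 * Z 1 1 ∈ m := by
        have : Z 1 1 * Z 1 1 = -(Z 1 0 * Z 0 1) := by linear_combination h11
        rw [this]
        exact m.neg_mem (m.mul_mem_left _ hZb)
      rcases hprime.mem_or_mem this with h | h <;> exact h
  obtain ⟨hXa, hXd⟩ := diag_mem X hX2 hXb
  obtain ⟨hYa, hYd⟩ := diag_mem Y hY2 hYb
  -- entry (0,0) of X*Y + Y*X equals 1, but lies in m
  have h1 : X 0 0 * Y 0 0 + X 0 1 * Y 1 0 + (Y 0 0 * X 0 0 + Y 0 1 * X 1 0) = 1 := by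
    have := congrFun (congrFun hXY 0) 0
    simp only [Matrix.add_apply, Matrix.mul_apply, Fin.sum_univ_two,
      Matrix.one_apply_eq] at this
    exact this
  have hmem : (1 : R) ∈ m := by
    rw [← h1]
    exact m.add_mem (m.add_mem (m.mul_mem_right _ hXa) (m.mul_mem_right _ hXb))
      (m.add_mem (m.mul_mem_right _ hYa) (m.mul_mem_right _ hYb))
  exact hmax.ne_top (Ideal.eq_top_of_isUnit_mem m hmem isUnit_one)
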